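/- Let F be a CDF on [a,b] with positive density f, let γ ∈ (0,1) and s ∈ (a,b). Define H_G(x) = ∫_a^x t dG(t) − ∫_a^x (1 − G(t)) dt − a for any distribution G. Then for the posterior F_{γ,s} (which equals γF before s and γF + (1−γ) from s onward): H_{F_{γ,s}}(x) = γ·H_F(x) − (1−γ)·x for x < s, and H_{F_{γ,s}}(x) = γ·H_F(x) for x ≥ s. -/

import Mathlib

open MeasureTheory

/-- The function `H_G(x) = ∫_a^x t dG(t) − ∫_a^x (1 − G(t)) dt − a`, where the first integral
is a Lebesgue–Stieltjes integral with respect to `G`. -/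
noncomputable def Hfun (a : ℝ) (G : StieltjesFunction ℝ) (x : ℝ) : ℝ :=
  (∫ t in Set.Ioc a x, t ∂G.measure) - (∫ t in a..x, (1 - G t)) - a

private lemma measure_post (γ s : ℝ) (F Fγs : StieltjesFunction ℝ)
    (hγ0 : 0 ≤ γ) (hγ1 : γ ≤ 1)
    (hpost : ∀ v, Fγs v = γ * F v + (1 - γ) * (if s ≤ v then 1 else 0)) :
    Fγs.measure = ENNReal.ofReal γ • F.measure
      + ENNReal.ofReal (1 - γ) • Measure.dirac s := by
  classical
  refine Measure.ext_of_Ioc _ _ (fun u v huv => ?_)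
  rw [StieltjesFunction.measure_Ioc, Measure.add_apply, Measure.smul_apply,
    Measure.smul_apply, StieltjesFunction.measure_Ioc,
    Measure.dirac_apply' _ measurableSet_Ioc, hpost, hpost]
  have hF : F u ≤ F v := F.mono huv.le
  rcases le_or_gt s u with h | h
  · have hv : s ≤ v := h.trans huv.le
    have hsnot : s ∉ Set.Ioc u v := fun hc => absurd hc.1 (not_lt.2 h)
    simp only [if_pos h, if_pos hv, Set.indicator_of_notMem hsnot, smul_eq_mul, mul_zero,
      add_zero, ← ENNReal.ofReal_mul hγ0]
    congr 1; ring
  · rcases le_or_gt s v with hv | hv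
    · have hsmem : s ∈ Set.Ioc u v := ⟨h, hv⟩
      simp only [if_pos hv, if_neg (not_le.2 h), Set.indicator_of_mem hsmem, smul_eq_mul,
        Pi.one_apply, mul_one, ← ENNReal.ofReal_mul hγ0]
      rw [← ENNReal.ofReal_add (by nlinarith) (by linarith)]
      congr 1; ring
    · have hsnot : s ∉ Set.Ioc u v := fun hc => absurd hc.2 (not_le.2 hv)
      simp only [if_neg (not_le.2 h), if_neg (not_le.2 hv), Set.indicator_of_notMem hsnot,
        smul_eq_mul, mul_zero, add_zero, ← ENNReal.ofReal_mul hγ0]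
      congr 1; ring

/-- For the hallucination posterior `F_{γ,s}` (equal to `γF` before `s` and to
`γF + (1−γ)` from `s` onward), `H_{F_{γ,s}}(x) = γ·H_F(x) − (1−γ)·x` for `x < s` and
`H_{F_{γ,s}}(x) = γ·H_F(x)` for `x ≥ s`. -/
theorem H_of_posterior (a b γ s : ℝ) (F Fγs : StieltjesFunction ℝ) (f : ℝ → ℝ)
    (hab : a < b) (hγ : γ ∈ Set.Ioo (0:ℝ) 1) (hs : s ∈ Set.Ioo a b)
    (hf : ∀ v ∈ Set.Icc a b, 0 < f v)
    (hderiv : ∀ v ∈ Set.Icc a b, HasDerivAt F (f v) v)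
    (hpost : ∀ v, Fγs v = γ * F v + (1 - γ) * (if s ≤ v then 1 else 0)) :
    (∀ x ∈ Set.Ico a s, Hfun a Fγs x = γ * Hfun a F x - (1 - γ) * x) ∧
    (∀ x ∈ Set.Icc s b, Hfun a Fγs x = γ * Hfun a F x) := by
  classical
  obtain ⟨hγ0, hγ1⟩ := hγ
  have hγ0' : 0 ≤ γ := hγ0.le
  have h1γ : 0 ≤ 1 - γ := by linarith
  have has : a < s := hs.1
  have hmeas := measure_post γ s F Fγs hγ0' hγ1.le hpost
  -- first integral
  have key : ∀ x, a ≤ x → (∫ t in Set.Ioc a x, t ∂Fγs.measure)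
      = γ * (∫ t in Set.Ioc a x, t ∂F.measure)
        + (1 - γ) * (if s ≤ x then s else 0) := by
    intro x hax
    have hFi : IntegrableOn (fun t : ℝ => t) (Set.Ioc a x) F.measure :=
      (continuousOn_id.integrableOn_compact isCompact_Icc).mono_set Set.Ioc_subset_Icc_self
    rw [hmeas, Measure.restrict_add, Measure.restrict_smul, Measure.restrict_smul]
    rcases le_or_gt s x with hsx | hxs
    · have hmem : s ∈ Set.Ioc a x := ⟨has, hsx⟩
      have hd : (Measure.dirac s).restrict (Set.Ioc a x) = Measure.dirac s := by
        rw [restrict_dirac' measurableSet_Ioc, if_pos hmem]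
      rw [hd]
      have hdi : Integrable (fun t : ℝ => t) (Measure.dirac s) := by
        refine ⟨aestronglyMeasurable_id, ?_⟩
        simp [HasFiniteIntegral, lintegral_dirac]
      rw [integral_add_measure (hFi.smul_measure ENNReal.ofReal_ne_top)
        (hdi.smul_measure ENNReal.ofReal_ne_top),
        integral_smul_measure, integral_smul_measure, integral_dirac,
        ENNReal.toReal_ofReal hγ0', ENNReal.toReal_ofReal h1γ, if_pos hsx,
        smul_eq_mul, smul_eq_mul]
    · have hmem : s ∉ Set.Ioc a x := fun hc => absurd hc.2 (not_le.2 hxs)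
      have hd : (Measure.dirac s).restrict (Set.Ioc a x) = 0 := by
        rw [restrict_dirac' measurableSet_Ioc, if_neg hmem]
      rw [hd, smul_zero]
      rw [integral_add_measure (hFi.smul_measure ENNReal.ofReal_ne_top)
        (integrable_zero_measure),
        integral_smul_measure, integral_zero_measure,
        ENNReal.toReal_ofReal hγ0', if_neg (not_le.2 hxs), smul_eq_mul]
      ring
  -- integrability of 1 - F
  have hFint : ∀ x, a ≤ x → IntegrableOn (fun t => 1 - F t) (Set.Ioc a x) volume := by
    intro x hax
    have h1 : IntegrableOn F (Set.Ioc a x) volume :=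
      ((F.mono.monotoneOn _).integrableOn_isCompact isCompact_Icc).mono_set
        Set.Ioc_subset_Icc_self
    exact (integrableOn_const measure_Ioc_lt_top.ne).sub h1
  constructor
  · intro x hx
    obtain ⟨hax, hxs⟩ := hx
    have hint2 : (∫ t in a..x, (1 - Fγs t)) = γ * (∫ t in a..x, (1 - F t)) + (1 - γ) * (x - a) := by
      rw [intervalIntegral.integral_of_le hax, intervalIntegral.integral_of_le hax]
      have hcongr : ∀ t ∈ Set.Ioc a x, 1 - Fγs t = γ * (1 - F t) + (1 - γ) := by
        intro t ht
        rw [hpost t, if_neg (not_le.2 (lt_of_le_of_lt ht.2 hxs))]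
        ring
      rw [setIntegral_congr_fun measurableSet_Ioc hcongr,
        integral_add ((hFint x hax).const_mul γ) (integrableOn_const measure_Ioc_lt_top.ne),
        integral_const_mul, setIntegral_const, Real.volume_real_Ioc_of_le hax, smul_eq_mul]
      ring
    simp only [Hfun, key x hax, if_neg (not_le.2 hxs), hint2]
    ring
  · intro x hx
    obtain ⟨hsx, hxb⟩ := hx
    have hax : a ≤ x := has.le.trans hsx
    have hint2 : (∫ t in a..x, (1 - Fγs t))
        = γ * (∫ t in a..x, (1 - F t)) + (1 - γ) * (s - a) := by
      rw [intervalIntegral.integral_of_le hax, intervalIntegral.integral_of_le hax]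
      have hstep : (fun t : ℝ => if s ≤ t then (0:ℝ) else 1)
          = Set.indicator (Set.Iio s) (fun _ => (1:ℝ)) := by
        funext t
        by_cases h : s ≤ t
        · simp [Set.indicator, Set.mem_Iio, not_lt.2 h, h]
        · simp [Set.indicator, Set.mem_Iio, not_le.1 h, h]
      have hcongr : ∀ t ∈ Set.Ioc a x,
          1 - Fγs t = γ * (1 - F t) + (1 - γ) * (if s ≤ t then (0:ℝ) else 1) := by
        intro t ht
        rw [hpost t]
        by_cases h : s ≤ t <;> simp [h] <;> ring
      have hstepint : IntegrableOn (fun t : ℝ => if s ≤ t then (0:ℝ) else 1)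
          (Set.Ioc a x) volume := by
        rw [hstep]
        exact (integrableOn_const measure_Ioc_lt_top.ne).indicator measurableSet_Iio
      have hstepval : (∫ t in Set.Ioc a x, (if s ≤ t then (0:ℝ) else 1)) = s - a := by
        rw [hstep, setIntegral_indicator measurableSet_Iio]
        have hset : Set.Ioc a x ∩ Set.Iio s = Set.Ioo a s := by
          ext t
          simp only [Set.mem_inter_iff, Set.mem_Ioc, Set.mem_Iio, Set.mem_Ioo]
          constructor
          · rintro ⟨⟨h1, h2⟩, h3⟩; exact ⟨h1, h3⟩
          · rintro ⟨h1, h3⟩; exact ⟨⟨h1, le_trans (le_of_lt h3) hsx⟩, h3⟩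
        rw [hset, setIntegral_const, Real.volume_real_Ioo_of_le has.le, smul_eq_mul]
        ring
      rw [setIntegral_congr_fun measurableSet_Ioc hcongr,
        integral_add ((hFint x hax).const_mul γ) (hstepint.const_mul _),
        integral_const_mul, integral_const_mul, hstepval]
    simp only [Hfun, key x hax, if_pos hsx, hint2]
    ring
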